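/- With the hypotheses of the wave-speed quadratic, (1/2)f'(1) = (1/2)(1-k)(U⁰ - U¹)² + (1/2)(1-k)[(U²)² + (U³)²] + (1/2)(1+k) > 0 and (1/2)f'(-1) = -(1/2)(1-k)(U⁰ + U¹)² - (1/2)(1-k)[(U²)² + (U³)²] - (1/2)(1+k) < 0. -/

import Mathlib

/-- Derivative of the wave-speed quadratic at `±1`:
`(1/2)f'(1) = (1/2)(1-k)(U⁰-U¹)² + (1/2)(1-k)[(U²)²+(U³)²] + (1/2)(1+k) > 0` and
`(1/2)f'(-1) = -(1/2)(1-k)(U⁰+U¹)² - (1/2)(1-k)[(U²)²+(U³)²] - (1/2)(1+k) < 0`. -/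
theorem wave_speed_deriv_at_pm_one (k : ℝ) (hk0 : 0 ≤ k) (hk1 : k ≤ 1)
    (U : Fin 4 → ℝ)
    (hU : -(U 0) ^ 2 + (U 1) ^ 2 + (U 2) ^ 2 + (U 3) ^ 2 = -1)
    (f : ℝ → ℝ)
    (hf : ∀ lam, f lam = lam ^ 2 * ((U 0) ^ 2 * (1 - k) + k) -
        2 * lam * (U 0 * U 1 * (1 - k)) + (U 1) ^ 2 * (1 - k) - k) :
    ((1 / 2) * deriv f 1 =
        (1 / 2) * (1 - k) * (U 0 - U 1) ^ 2 +
          (1 / 2) * (1 - k) * ((U 2) ^ 2 + (U 3) ^ 2) + (1 / 2) * (1 + k) ∧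
      0 < (1 / 2) * deriv f 1) ∧
    ((1 / 2) * deriv f (-1) =
        -((1 / 2) * (1 - k) * (U 0 + U 1) ^ 2) -
          (1 / 2) * (1 - k) * ((U 2) ^ 2 + (U 3) ^ 2) - (1 / 2) * (1 + k) ∧
      (1 / 2) * deriv f (-1) < 0) := by
  have hfe : f = fun lam => lam ^ 2 * ((U 0) ^ 2 * (1 - k) + k) -
      2 * lam * (U 0 * U 1 * (1 - k)) + (U 1) ^ 2 * (1 - k) - k := funext hf
  subst hfe
  have hd : ∀ x : ℝ, deriv (fun lam : ℝ => lam ^ 2 * ((U 0) ^ 2 * (1 - k) + k) -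
      2 * lam * (U 0 * U 1 * (1 - k)) + (U 1) ^ 2 * (1 - k) - k) x
      = 2 * x * ((U 0) ^ 2 * (1 - k) + k) - 2 * (U 0 * U 1 * (1 - k)) := by
    intro x
    have h : HasDerivAt (fun lam : ℝ => lam ^ 2 * ((U 0) ^ 2 * (1 - k) + k) -
        2 * lam * (U 0 * U 1 * (1 - k)) + (U 1) ^ 2 * (1 - k) - k)
        (2 * x * ((U 0) ^ 2 * (1 - k) + k) - 2 * (U 0 * U 1 * (1 - k))) x := by
      have h1 : HasDerivAt (fun lam : ℝ => lam ^ 2) (2 * x) x := by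
        simpa using (hasDerivAt_pow 2 x)
      have h2 := ((h1.mul_const ((U 0) ^ 2 * (1 - k) + k)).sub
        (((hasDerivAt_id x).const_mul 2).mul_const (U 0 * U 1 * (1 - k)))).add_const
        ((U 1) ^ 2 * (1 - k))
      have h3 := h2.sub_const k
      convert h3 using 1
      all_goals first | rfl | ring
    exact h.deriv
  rw [hd 1, hd (-1)]
  have h1 : 2 * (1:ℝ) * ((U 0) ^ 2 * (1 - k) + k) - 2 * (U 0 * U 1 * (1 - k)) =
      (1 - k) * (U 0 - U 1) ^ 2 + (1 - k) * ((U 2) ^ 2 + (U 3) ^ 2) + (1 + k) := by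
    nlinarith [hU]
  have h2 : 2 * (-1:ℝ) * ((U 0) ^ 2 * (1 - k) + k) - 2 * (U 0 * U 1 * (1 - k)) =
      -((1 - k) * (U 0 + U 1) ^ 2) - (1 - k) * ((U 2) ^ 2 + (U 3) ^ 2) - (1 + k) := by
    nlinarith [hU]
  refine ⟨⟨by rw [h1]; ring, ?_⟩, ⟨by rw [h2]; ring, ?_⟩⟩
  · rw [h1]; nlinarith [sq_nonneg (U 0 - U 1), sq_nonneg (U 2), sq_nonneg (U 3)]
  · rw [h2]; nlinarith [sq_nonneg (U 0 + U 1), sq_nonneg (U 2), sq_nonneg (U 3)]
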